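/- For n ≥ 0 and q ≥ 3, A_q(2^n, 2) ≥ 2^n. -/

import Mathlib

open Finset

/-- ℓ1 (Hamming) weight of a `q`-ary vector of length `n`. -/
def hw {n q : ℕ} (x : Fin n → Fin q) : ℕ := ∑ k, (x k : ℕ)

/-- `E_q(n,i)`: the set of `q`-ary vectors of length `n` and weight `i`. -/
def lev (q n i : ℕ) : Finset (Fin n → Fin q) := Finset.univ.filter (fun x => hw x = i)

/-- Coordinatewise domination `x ≤ y`. -/
def domLe {n q : ℕ} (x y : Fin n → Fin q) : Prop := ∀ k, (x k : ℕ) ≤ (y k : ℕ)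

instance {n q : ℕ} (x y : Fin n → Fin q) : Decidable (domLe x y) :=
  inferInstanceAs (Decidable (∀ k, (x k : ℕ) ≤ (y k : ℕ)))

/-- `Y` covers `E_q(n,i-1)`: every vector of weight `i-1` is dominated by some `y ∈ Y`. -/
def Covers (q n i : ℕ) (Y : Finset (Fin n → Fin q)) : Prop :=
  ∀ x ∈ lev q n (i - 1), ∃ y ∈ Y, domLe x y

/-- A codeword class at level `i`: a subset of `E_q(n,i)` covering `E_q(n,i-1)`. -/
def IsClass (q n i : ℕ) (Y : Finset (Fin n → Fin q)) : Prop :=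
  Y ⊆ lev q n i ∧ Covers q n i Y

/-- `A_q(n,i)`: the maximum number of pairwise disjoint codeword classes in `E_q(n,i)`. -/
noncomputable def A (q n i : ℕ) : ℕ :=
  sSup {m | ∃ 𝒴 : Finset (Finset (Fin n → Fin q)),
    (∀ Y ∈ 𝒴, IsClass q n i Y) ∧
    (𝒴 : Set (Finset (Fin n → Fin q))).Pairwise Disjoint ∧ 𝒴.card = m}

namespace Stmt13

/-- xor on `Fin (2^n)`. -/
def fx {n : ℕ} (a x : Fin (2^n)) : Fin (2^n) :=
  ⟨x.val ^^^ a.val, Nat.xor_lt_two_pow x.isLt a.isLt⟩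

lemma fx_cancel {n : ℕ} {a b x : Fin (2^n)} (h : fx b (fx a x) = x) : a = b := by
  have : (x.val ^^^ a.val) ^^^ b.val = x.val := congrArg Fin.val h
  rw [Nat.xor_assoc] at this
  have h2 : a.val ^^^ b.val = 0 :=
    Nat.xor_right_injective (x := x.val) (by show x.val ^^^ (a.val ^^^ b.val) = x.val ^^^ 0; rw [Nat.xor_zero]; exact this)
  exact Fin.ext (xor_eq_zero_iff.mp h2)

lemma fx_inj {n : ℕ} {a b x : Fin (2^n)} (h : fx a x = fx b x) : a = b := by
  have : x.val ^^^ a.val = x.val ^^^ b.val := congrArg Fin.val h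
  exact Fin.ext (Nat.xor_right_inj.mp this)

lemma fx_self {n : ℕ} {a x : Fin (2^n)} (h : fx a x = x) : a = (⟨0, Nat.two_pow_pos n⟩ : Fin (2^n)) := by
  have : x.val ^^^ a.val = x.val := congrArg Fin.val h
  have h2 : x.val ^^^ a.val = x.val ^^^ 0 := by rw [this, Nat.xor_zero]
  exact Fin.ext (Nat.xor_right_inj.mp h2)

/-- Natural-number weight pattern of the pair `(i,j)`. -/
def w {N : ℕ} (i j k : Fin N) : ℕ := (if k = i then 1 else 0) + (if k = j then 1 else 0)

lemma w_le {N : ℕ} (i j k : Fin N) : w i j k ≤ 2 := by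
  unfold w; split_ifs <;> omega

lemma w_pos {N : ℕ} {i j k : Fin N} (h : 0 < w i j k) : k = i ∨ k = j := by
  unfold w at h; split_ifs at h with h1 h2 <;> tauto

/-- The codeword `e_i + e_j` as a `q`-ary vector (value 2 at `i` if `i = j`). -/
def vec {N q : ℕ} (hq : 3 ≤ q) (i j : Fin N) : Fin N → Fin q :=
  fun k => ⟨w i j k, by have := w_le i j k; omega⟩

lemma vec_val {N q : ℕ} (hq : 3 ≤ q) (i j k : Fin N) : ((vec hq i j k : Fin q) : ℕ) = w i j k := rfl

lemma hw_vec {N q : ℕ} (hq : 3 ≤ q) (i j : Fin N) : hw (vec hq i j) = 2 := by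
  unfold hw
  have : ∀ k, ((vec hq i j k : Fin q) : ℕ) = w i j k := fun k => rfl
  simp only [this]
  unfold w
  rw [Finset.sum_add_distrib]
  simp

/-- The `a`-th class: all pairs `{x, x ⊕ a}`. -/
def cls {n q : ℕ} (hq : 3 ≤ q) (a : Fin (2^n)) : Finset (Fin (2^n) → Fin q) :=
  Finset.image (fun x => vec hq x (fx a x)) Finset.univ

lemma key {n q : ℕ} (hq : 3 ≤ q) {a b x y : Fin (2^n)}
    (h : vec hq x (fx a x) = vec hq y (fx b y)) : a = b := by
  have hw : ∀ k, w x (fx a x) k = w y (fx b y) k := by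
    intro k
    have := congrFun h k
    have := congrArg Fin.val this
    simpa [vec_val] using this
  by_cases hxy : x = y
  · subst hxy
    -- evaluate at fx a x
    have h1 : 0 < w x (fx b x) (fx a x) := by
      rw [← hw]; unfold w; simp
    rcases w_pos h1 with h2 | h2
    · -- fx a x = x, so a = 0
      have ha := fx_self h2
      have h3 : 0 < w x (fx a x) (fx b x) := by
        rw [hw]; unfold w; simp
      rcases w_pos h3 with h4 | h4
      · have hb := fx_self h4
        rw [ha, hb]
      · exact fx_inj h4.symm
    · exact fx_inj h2
  · -- x ≠ y : then y = fx a x and x = fx b y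
    have h1 : 0 < w x (fx a x) y := by
      rw [hw]; unfold w; simp
    have h2 : 0 < w y (fx b y) x := by
      rw [← hw]; unfold w; simp
    have hy : y = fx a x := by
      rcases w_pos h1 with h | h
      · exact absurd h.symm hxy
      · exact h
    have hx : x = fx b y := by
      rcases w_pos h2 with h | h
      · exact absurd h hxy
      · exact h
    exact fx_cancel (by rw [← hy, ← hx])

lemma cls_disjoint {n q : ℕ} (hq : 3 ≤ q) {a b : Fin (2^n)} (hab : a ≠ b) :
    Disjoint (cls hq a) (cls hq b) := by
  rw [Finset.disjoint_left]
  intro z hza hzb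
  simp only [cls, Finset.mem_image, Finset.mem_univ, true_and] at hza hzb
  obtain ⟨x, hx⟩ := hza
  obtain ⟨y, hy⟩ := hzb
  exact hab (key hq (hx.trans hy.symm))

lemma cls_inj {n q : ℕ} (hq : 3 ≤ q) : Function.Injective (cls (n := n) hq) := by
  intro a b hab
  by_contra hne
  have hd := cls_disjoint hq hne
  rw [hab, disjoint_self] at hd
  have : (vec hq (0 : Fin (2^n)) (fx b 0)) ∈ cls hq b := by
    simp only [cls, Finset.mem_image, Finset.mem_univ, true_and]
    exact ⟨0, rfl⟩
  rw [hd] at this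
  simp at this

lemma cls_isClass {n q : ℕ} (hq : 3 ≤ q) (a : Fin (2^n)) : IsClass q (2^n) 2 (cls hq a) := by
  constructor
  · intro z hz
    simp only [cls, Finset.mem_image, Finset.mem_univ, true_and] at hz
    obtain ⟨x, hx⟩ := hz
    simp only [lev, Finset.mem_filter, Finset.mem_univ, true_and]
    rw [← hx]; exact hw_vec hq x (fx a x)
  · intro x hx
    simp only [lev, Finset.mem_filter, Finset.mem_univ, true_and] at hx
    -- hw x = 1 : find the unique nonzero coordinate
    have hsum : ∑ k, ((x k : ℕ)) = 1 := hx
    have hex : ∃ k, (x k : ℕ) ≠ 0 := by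
      by_contra h
      push_neg at h
      rw [Finset.sum_eq_zero (fun k _ => h k)] at hsum
      omega
    obtain ⟨k, hk⟩ := hex
    refine ⟨vec hq k (fx a k), ?_, ?_⟩
    · simp only [cls, Finset.mem_image, Finset.mem_univ, true_and]
      exact ⟨k, rfl⟩
    · intro j
      by_cases hj : j = k
      · subst hj
        have hle : (x j : ℕ) ≤ 1 := by
          calc (x j : ℕ) ≤ ∑ k, (x k : ℕ) :=
            Finset.single_le_sum (f := fun i => ((x i : ℕ))) (fun i _ => Nat.zero_le _) (Finset.mem_univ j)
          _ = 1 := hsum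
        rw [vec_val]
        unfold w
        split_ifs <;> omega
      · have hj0 : (x j : ℕ) = 0 := by
          by_contra h0
          have h1 : 1 ≤ (x j : ℕ) := Nat.one_le_iff_ne_zero.mpr h0
          have h2 : 1 ≤ (x k : ℕ) := Nat.one_le_iff_ne_zero.mpr hk
          have hk' : k ∈ Finset.univ.erase j := Finset.mem_erase.mpr ⟨fun h => hj h.symm, Finset.mem_univ k⟩
          have h3 : (x k : ℕ) ≤ ∑ i ∈ Finset.univ.erase j, (x i : ℕ) :=
            Finset.single_le_sum (f := fun i => ((x i : ℕ))) (fun i _ => Nat.zero_le _) hk'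
          have h4 : (x j : ℕ) + ∑ i ∈ Finset.univ.erase j, (x i : ℕ) = ∑ i, (x i : ℕ) :=
            Finset.add_sum_erase Finset.univ (fun i => ((x i : ℕ))) (Finset.mem_univ j)
          omega
        rw [hj0]
        exact Nat.zero_le _

end Stmt13

/-- For n ≥ 0 and q ≥ 3, A_q(2^n,2) ≥ 2^n. -/
theorem stmt_13 (q n : ℕ) (hq : 3 ≤ q) : 2 ^ n ≤ A q (2 ^ n) 2 := by
  unfold A
  apply le_csSup
  · refine ⟨Fintype.card (Finset (Fin (2^n) → Fin q)), ?_⟩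
    rintro m ⟨𝒴, -, -, rfl⟩
    exact Finset.card_le_univ 𝒴
  · refine ⟨Finset.image (Stmt13.cls (n := n) hq) Finset.univ, ?_, ?_, ?_⟩
    · intro Y hY
      simp only [Finset.mem_image, Finset.mem_univ, true_and] at hY
      obtain ⟨a, rfl⟩ := hY
      exact Stmt13.cls_isClass hq a
    · intro Y hY Z hZ hYZ
      simp only [Finset.coe_image, Set.mem_image, Finset.coe_univ, Set.mem_univ, true_and] at hY hZ
      obtain ⟨a, rfl⟩ := hY
      obtain ⟨b, rfl⟩ := hZ
      exact Stmt13.cls_disjoint hq (fun h => hYZ (by rw [h]))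
    · rw [Finset.card_image_of_injective _ (Stmt13.cls_inj hq)]
      simp
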